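/- Let r ≥ 2 and s ≥ 1 be integers, let φ : ℂ^r → ℂ^s be a nonzero linear map, let (w_1,…,w_r) be a basis of ℂ^r, and fix 1 ≤ i ≤ r−1. Then −min{ γ^{(i)}_j : j ∈ {1,…,r}, φ(w_j) ≠ 0 } equals −i if the span of w_1,…,w_i is contained in the kernel of φ, and equals r−i otherwise. -/

import Mathlib

/-- Hilbert–Mumford weight for framed modules: for a nonzero linear map
`φ : ℂ^r → ℂ^s`, a basis `(w_1,…,w_r)` of `ℂ^r`, and `1 ≤ i ≤ r−1`, the weight
`−min{ γ^{(i)}_j : φ(w_j) ≠ 0 }` (0-based indexing: `γ^{(i)}_j = i − r` for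
`j < i` and `= i` otherwise) equals `−i` if `span(w_1,…,w_i) ⊆ ker φ` and
`r − i` otherwise. -/
theorem framed_module_weight (r s : ℕ) (hr : 2 ≤ r) (hs : 1 ≤ s)
    (φ : (Fin r → ℂ) →ₗ[ℂ] (Fin s → ℂ)) (hφ : φ ≠ 0)
    (w : Module.Basis (Fin r) ℂ (Fin r → ℂ))
    (i : ℕ) (hi1 : 1 ≤ i) (hi2 : i ≤ r - 1) :
    (Submodule.span ℂ (⇑w '' {j : Fin r | (j : ℕ) < i}) ≤ LinearMap.ker φ →
      -sInf {m : ℤ | ∃ j : Fin r, φ (w j) ≠ 0 ∧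
        (if (j : ℕ) < i then (i : ℤ) - r else (i : ℤ)) = m} = -(i : ℤ)) ∧
    (¬ Submodule.span ℂ (⇑w '' {j : Fin r | (j : ℕ) < i}) ≤ LinearMap.ker φ →
      -sInf {m : ℤ | ∃ j : Fin r, φ (w j) ≠ 0 ∧
        (if (j : ℕ) < i then (i : ℤ) - r else (i : ℤ)) = m} = (r : ℤ) - i) := by
  have hir : (i : ℤ) < r := by
    have : i < r := lt_of_le_of_lt hi2 (Nat.sub_lt (by omega) one_pos)
    exact_mod_cast this
  constructor
  · intro hspan
    have hset : {m : ℤ | ∃ j : Fin r, φ (w j) ≠ 0 ∧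
        (if (j : ℕ) < i then (i : ℤ) - r else (i : ℤ)) = m} = {(i : ℤ)} := by
      ext m
      constructor
      · rintro ⟨j, hj, hm⟩
        have hji : ¬ (j : ℕ) < i := by
          intro hlt
          exact hj (hspan (Submodule.subset_span ⟨j, hlt, rfl⟩))
        simp only [if_neg hji] at hm
        simp [← hm]
      · rintro rfl
        -- there exists j with φ (w j) ≠ 0
        have : ∃ j : Fin r, φ (w j) ≠ 0 := by
          by_contra h
          push_neg at h
          exact hφ (w.ext (by simpa using h))
        obtain ⟨j, hj⟩ := this
        have hji : ¬ (j : ℕ) < i := by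
          intro hlt
          exact hj (hspan (Submodule.subset_span ⟨j, hlt, rfl⟩))
        exact ⟨j, hj, by simp [hji]⟩
    rw [hset, csInf_singleton]
  · intro hspan
    rw [Submodule.span_le] at hspan
    have hex : ∃ j : Fin r, (j : ℕ) < i ∧ φ (w j) ≠ 0 := by
      by_contra h
      push_neg at h
      apply hspan
      rintro x ⟨j, hj, rfl⟩
      exact LinearMap.mem_ker.mpr (h j hj)
    obtain ⟨j, hj, hjφ⟩ := hex
    have : IsLeast {m : ℤ | ∃ j : Fin r, φ (w j) ≠ 0 ∧
        (if (j : ℕ) < i then (i : ℤ) - r else (i : ℤ)) = m} ((i : ℤ) - r) := by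
      constructor
      · exact ⟨j, hjφ, by simp [hj]⟩
      · rintro m ⟨k, hk, hm⟩
        by_cases hki : (k : ℕ) < i <;> simp only [if_pos, if_neg, hki, if_true, if_false] at hm <;> omega
    rw [this.csInf_eq]
    ring
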